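/- Fix h > 0 and a sequence of real numbers (w_n)_{n≥1}. For each ε > 0 define the sequence (ξ^ε_n)_{n≥0} by ξ^ε_0 = 0 and ξ^ε_n = (ξ^ε_{n-1} + w_n/ε)/(1 + h/ε²) for n ≥ 1. Then for every n ≥ 1: (i) the identity h·ξ^ε_n/ε = w_n + ε·(ξ^ε_{n-1} - ξ^ε_n) holds; (ii) ε·ξ^ε_n → 0 as ε → 0⁺; and consequently (iii) h·ξ^ε_n/ε → w_n as ε → 0⁺. -/

import Mathlib

open Filter

lemma implicit_euler_OU_aux
    (h : ℝ) (hh : 0 < h) (w : ℕ → ℝ)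
    (ξ : ℝ → ℕ → ℝ)
    (hξ0 : ∀ ε : ℝ, ξ ε 0 = 0)
    (hξ : ∀ ε > (0 : ℝ), ∀ n : ℕ,
      ξ ε (n + 1) = (ξ ε n + w (n + 1) / ε) / (1 + h / ε ^ 2)) :
    ∀ n : ℕ, Filter.Tendsto (fun ε => ε * ξ ε n)
      (nhdsWithin 0 (Set.Ioi 0)) (nhds 0) := by
  have hε : Tendsto (fun ε : ℝ => ε) (nhdsWithin 0 (Set.Ioi 0)) (nhds 0) :=
    (continuous_id.tendsto 0).mono_left nhdsWithin_le_nhds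
  intro n
  induction n with
  | zero =>
      simp only [hξ0, mul_zero]
      exact tendsto_const_nhds
  | succ n ih =>
      have key : ∀ ε ∈ Set.Ioi (0 : ℝ),
          (ε * (ε * ξ ε n) * ε + ε ^ 2 * w (n + 1)) / (ε ^ 2 + h)
            = ε * ξ ε (n + 1) := by
        intro ε hε
        rw [hξ ε hε n]
        have hε0 : (ε : ℝ) ≠ 0 := ne_of_gt hε
        have hd : ε ^ 2 + h ≠ 0 := by positivity
        field_simp
      have hev : (fun ε => (ε * (ε * ξ ε n) * ε + ε ^ 2 * w (n + 1)) / (ε ^ 2 + h))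
          =ᶠ[nhdsWithin 0 (Set.Ioi 0)] fun ε => ε * ξ ε (n + 1) :=
        eventually_nhdsWithin_of_forall key
      have hlim : Tendsto (fun ε => (ε * (ε * ξ ε n) * ε + ε ^ 2 * w (n + 1)) / (ε ^ 2 + h))
          (nhdsWithin 0 (Set.Ioi 0)) (nhds ((0 * 0 * 0 + 0 ^ 2 * w (n + 1)) / (0 ^ 2 + h))) := by
        apply Tendsto.div
        · exact ((hε.mul ih).mul hε).add (((hε.pow 2)).mul tendsto_const_nhds)
        · exact (hε.pow 2).add tendsto_const_nhds
        · positivity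
      have : ((0 : ℝ) * 0 * 0 + 0 ^ 2 * w (n + 1)) / (0 ^ 2 + h) = 0 := by
        simp
      rw [this] at hlim
      exact hlim.congr' hev

/-- The implicit Euler discretisation `ξₙᵉ = (ξₙ₋₁ᵉ + wₙ/ε)/(1 + h/ε²)` of the
Ornstein–Uhlenbeck process satisfies, for every `n ≥ 1`:
(i) `h ξₙᵉ/ε = wₙ + ε(ξₙ₋₁ᵉ - ξₙᵉ)`, (ii) `ε ξₙᵉ → 0` as `ε → 0⁺`, and
(iii) `h ξₙᵉ/ε → wₙ` as `ε → 0⁺`. -/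
theorem implicit_euler_OU_asymptotic_preserving
    (h : ℝ) (hh : 0 < h) (w : ℕ → ℝ)
    (ξ : ℝ → ℕ → ℝ)
    (hξ0 : ∀ ε : ℝ, ξ ε 0 = 0)
    (hξ : ∀ ε > (0 : ℝ), ∀ n : ℕ,
      ξ ε (n + 1) = (ξ ε n + w (n + 1) / ε) / (1 + h / ε ^ 2)) :
    ∀ n : ℕ,
      (∀ ε > (0 : ℝ),
        h * ξ ε (n + 1) / ε = w (n + 1) + ε * (ξ ε n - ξ ε (n + 1))) ∧
      Filter.Tendsto (fun ε => ε * ξ ε (n + 1))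
        (nhdsWithin 0 (Set.Ioi 0)) (nhds 0) ∧
      Filter.Tendsto (fun ε => h * ξ ε (n + 1) / ε)
        (nhdsWithin 0 (Set.Ioi 0)) (nhds (w (n + 1))) := by
  intro n
  have aux := implicit_euler_OU_aux h hh w ξ hξ0 hξ
  have hi : ∀ ε > (0 : ℝ),
      h * ξ ε (n + 1) / ε = w (n + 1) + ε * (ξ ε n - ξ ε (n + 1)) := by
    intro ε hε
    have hε0 : (ε : ℝ) ≠ 0 := ne_of_gt hε
    have hd : 1 + h / ε ^ 2 ≠ 0 := by positivity
    rw [hξ ε hε n]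
    field_simp
    ring
  refine ⟨hi, aux (n + 1), ?_⟩
  have hlim : Tendsto (fun ε => w (n + 1) + ε * (ξ ε n - ξ ε (n + 1)))
      (nhdsWithin 0 (Set.Ioi 0)) (nhds (w (n + 1) + (0 - 0))) := by
    have : ∀ ε : ℝ, ε * (ξ ε n - ξ ε (n + 1)) = ε * ξ ε n - ε * ξ ε (n + 1) := by
      intro ε; ring
    simp only [this]
    exact tendsto_const_nhds.add ((aux n).sub (aux (n + 1)))
  have h0 : w (n + 1) + ((0 : ℝ) - 0) = w (n + 1) := by ring
  rw [h0] at hlim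
  exact hlim.congr' (eventually_nhdsWithin_of_forall (fun ε hε => (hi ε hε).symm))
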